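/- Let (K, v) be a henselian valued field, let n ∈ ℕ with n ≥ 2, and let ε ∈ K× be such that v(ε) is not n-divisible in the value group vK. Then {x ∈ K : v(ε·x^n) > 0} = {x ∈ K : there exists y ∈ K with y^n − y^(n−1) = ε·x^n}. -/

import Mathlib

open Polynomial

section ValuationPrelude

variable {K : Type*} [Field K] {G : Type*} [AddCommGroup G] [LinearOrder G] [IsOrderedAddMonoid G]

/-- `v : K → G ∪ {∞}` is a (surjective) valuation on the field `K` with value group `G`. -/
def IsValuation (v : K → WithTop G) : Prop :=
  (∀ x, v x = ⊤ ↔ x = 0) ∧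
  (∀ x y, v (x * y) = v x + v y) ∧
  (∀ x y, min (v x) (v y) ≤ v (x + y)) ∧
  (∀ g : G, ∃ x, v x = (g : WithTop G))

/-- Hensel's Lemma holds for `(K, v)` for all polynomials of degree at most `n`. -/
def DegLEHenselian (v : K → WithTop G) (n : ℕ) : Prop :=
  ∀ f : Polynomial K, f.natDegree ≤ n → (∀ i, (0 : WithTop G) ≤ v (f.coeff i)) →
    ∀ a : K, (0 : WithTop G) ≤ v a →
      (0 : WithTop G) < v (f.eval a) →
      ¬ (0 : WithTop G) < v (f.derivative.eval a) →
      ∃ b : K, (0 : WithTop G) ≤ v b ∧ f.eval b = 0 ∧ (0 : WithTop G) < v (b - a)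

/-- `(K, v)` is henselian: Hensel's Lemma holds for all polynomials. -/
def IsHenselianValuation (v : K → WithTop G) : Prop :=
  ∀ n : ℕ, DegLEHenselian v n

end ValuationPrelude

section Aux
variable {K : Type*} [Field K] {G : Type*} [AddCommGroup G] [LinearOrder G] [IsOrderedAddMonoid G]
  {v : K → WithTop G}

lemma aux_v0 (hv : IsValuation v) : v 0 = ⊤ := (hv.1 0).2 rfl

lemma aux_v1 (hv : IsValuation v) : v 1 = 0 := by
  have h : v 1 = v 1 + v 1 := by
    have := hv.2.1 1 1; simpa using this
  have h1 : v 1 ≠ ⊤ := by simp [hv.1]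
  lift v (1:K) to G using h1 with g hg
  rw [← WithTop.coe_add] at h
  have hgg : g = g + g := WithTop.coe_inj.mp h
  have : g = 0 := add_eq_left.mp hgg.symm
  exact_mod_cast this

lemma aux_vneg (hv : IsValuation v) (x : K) : v (-x) = v x := by
  have hm1 : v (-1 : K) = 0 := by
    have h : v ((-1 : K) * (-1)) = v (-1) + v (-1) := hv.2.1 (-1) (-1)
    rw [show ((-1:K) * (-1)) = 1 by ring, aux_v1 hv] at h
    have h1 : v (-1 : K) ≠ ⊤ := by simp [hv.1]
    lift v (-1:K) to G using h1 with g hg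
    rw [← WithTop.coe_add] at h
    have h2 : g + g = 0 := by exact_mod_cast h.symm
    have : g = 0 := by
      by_contra hne
      rcases lt_or_gt_of_ne hne with h' | h'
      · exact absurd h2 (ne_of_lt (by simpa using add_lt_add h' h'))
      · exact absurd h2 (ne_of_gt (by simpa using add_lt_add h' h'))
    exact_mod_cast this
  have := hv.2.1 (-1) x
  rw [show (-1:K) * x = -x by ring, hm1, zero_add] at this
  exact this

lemma aux_vneg1 (hv : IsValuation v) : v (-1 : K) = 0 := by
  rw [show (-1 : K) = -(1:K) from rfl, aux_vneg hv, aux_v1 hv]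

lemma aux_vsub_nonneg (hv : IsValuation v) {a b : K} (ha : 0 ≤ v a) (hb : 0 ≤ v b) :
    0 ≤ v (a - b) := by
  calc (0:WithTop G) ≤ min (v a) (v b) := le_min ha hb
    _ ≤ v (a + -b) := by rw [show v b = v (-b) from (aux_vneg hv b).symm]; exact hv.2.2.1 a (-b)
    _ = v (a - b) := by rw [sub_eq_add_neg]

lemma aux_ultra (hv : IsValuation v) {a b : K} (h : v b < v a) : v (a + b) = v b := by
  have h1 : v b ≤ v (a + b) := by
    have := hv.2.2.1 a b
    rwa [min_eq_right h.le] at this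
  have h2 : v (a + b) ≤ v b := by
    have := hv.2.2.1 (a + b) (-a)
    rw [aux_vneg hv, show a + b + -a = b by ring] at this
    rcases min_le_iff.mp this with h' | h'
    · exact h'
    · exact absurd h' (not_le.mpr h)
  exact le_antisymm h2 h1

lemma aux_vpow (hv : IsValuation v) {x : K} {g : G} (hx : v x = (g : WithTop G)) (k : ℕ) :
    v (x ^ k) = ((k • g : G) : WithTop G) := by
  induction k with
  | zero => simpa using aux_v1 hv
  | succ m ih =>
      rw [pow_succ, hv.2.1, ih, hx, ← WithTop.coe_add, succ_nsmul]

end Aux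

theorem stmt1 {K : Type*} [Field K] {G : Type*} [AddCommGroup G] [LinearOrder G] [IsOrderedAddMonoid G]
    (v : K → WithTop G) (hval : IsValuation v) (hhens : IsHenselianValuation v)
    (n : ℕ) (hn : 2 ≤ n) (ε : K) (hε : ε ≠ 0)
    (hnd : ¬ ∃ h : G, v ε = ((n • h : G) : WithTop G)) :
    {x : K | (0 : WithTop G) < v (ε * x ^ n)} =
      {x : K | ∃ y : K, y ^ n - y ^ (n - 1) = ε * x ^ n} := by
  ext x
  simp only [Set.mem_setOf_eq]
  constructor
  · intro hx
    set c := ε * x ^ n with hc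
    set f : Polynomial K := X ^ n - X ^ (n - 1) - C c with hf
    have hdeg : f.natDegree ≤ n := by
      apply le_trans (natDegree_sub_le _ _)
      simp only [natDegree_C, max_le_iff]
      refine ⟨le_trans (natDegree_sub_le _ _) ?_, by omega⟩
      simp [natDegree_X_pow]
    have hcoeff : ∀ i, (0 : WithTop G) ≤ v (f.coeff i) := by
      intro i
      have h1 : (0:WithTop G) ≤ v ((X ^ n : Polynomial K).coeff i) := by
        rw [coeff_X_pow]; split_ifs <;> simp [aux_v1 hval, aux_v0 hval]
      have h2 : (0:WithTop G) ≤ v ((X ^ (n-1) : Polynomial K).coeff i) := by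
        rw [coeff_X_pow]; split_ifs <;> simp [aux_v1 hval, aux_v0 hval]
      have h3 : (0:WithTop G) ≤ v ((C c : Polynomial K).coeff i) := by
        rw [coeff_C]; split_ifs with h
        · exact hx.le
        · simp [aux_v0 hval]
      rw [hf]
      simp only [coeff_sub]
      exact aux_vsub_nonneg hval (aux_vsub_nonneg hval h1 h2) h3
    have heval1 : f.eval 1 = -c := by
      simp [hf]
    have hd : f.derivative.eval 1 = 1 := by
      have hder : f.derivative = C (n : K) * X ^ (n-1) - C ((n-1 : ℕ) : K) * X ^ (n-1-1) := by
        simp [hf, derivative_X_pow]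
      rw [hder]
      simp only [eval_sub, eval_mul, eval_C, eval_pow, eval_X, one_pow, mul_one]
      have : ((n - 1 : ℕ) : K) = (n : K) - 1 := by
        have := Nat.cast_sub (by omega : 1 ≤ n) (R := K)
        simpa using this
      rw [this]; ring
    obtain ⟨b, hb0, hbe, -⟩ := hhens n f hdeg hcoeff 1 (by rw [aux_v1 hval])
      (by rw [heval1, aux_vneg hval]; exact hx)
      (by rw [hd, aux_v1 hval]; simp)
    refine ⟨b, ?_⟩
    have hb : b ^ n - b ^ (n-1) - c = 0 := by simpa [hf] using hbe
    have := sub_eq_zero.mp hb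
    rw [hc] at this
    exact this
  · rintro ⟨y, hy⟩
    by_contra hlt
    push_neg at hlt
    have hx0 : x ≠ 0 := by
      rintro rfl
      rw [zero_pow (by omega : n ≠ 0), mul_zero, aux_v0 hval, top_le_iff] at hlt
      simp at hlt
    have hy0 : y ≠ 0 := by
      rintro rfl
      rw [zero_pow (by omega : n ≠ 0), zero_pow (by omega : n - 1 ≠ 0), sub_zero] at hy
      rcases mul_eq_zero.mp hy.symm with h | h
      · exact hε h
      · exact hx0 (pow_eq_zero_iff (by omega : n ≠ 0) |>.mp h)
    obtain ⟨gy, hgy⟩ : ∃ gy : G, v y = (gy : WithTop G) := by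
      cases h : v y with
      | top => exact absurd ((hval.1 y).mp h) hy0
      | coe g => exact ⟨g, rfl⟩
    obtain ⟨gx, hgx⟩ : ∃ gx : G, v x = (gx : WithTop G) := by
      cases h : v x with
      | top => exact absurd ((hval.1 x).mp h) hx0
      | coe g => exact ⟨g, rfl⟩
    obtain ⟨ge, hge⟩ : ∃ ge : G, v ε = (ge : WithTop G) := by
      cases h : v ε with
      | top => exact absurd ((hval.1 ε).mp h) hε
      | coe g => exact ⟨g, rfl⟩
    have hvrhs : v (ε * x ^ n) = ((ge + n • gx : G) : WithTop G) := by
      rw [hval.2.1, hge, aux_vpow hval hgx, WithTop.coe_add]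
    have hfac : y ^ n - y ^ (n-1) = y ^ (n-1) * (y - 1) := by
      obtain ⟨m, rfl⟩ : ∃ m, n = m + 1 := ⟨n - 1, by omega⟩
      rw [Nat.add_sub_cancel, pow_succ]
      ring
    have hveq : (((n-1) • gy : G) : WithTop G) + v (y - 1) = ((ge + n • gx : G) : WithTop G) := by
      rw [← aux_vpow hval hgy, ← hval.2.1, ← hfac, hy, hvrhs]
    have hle : ((ge + n • gx : G) : WithTop G) ≤ 0 := by rw [← hvrhs]; exact hlt
    rcases lt_trichotomy gy 0 with hg | hg | hg
    · -- v y < 0 : v (y-1) = v y, so ge + n gx = n gy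
      have h1 : v (y - 1) = (gy : WithTop G) := by
        have h2 : v ((-1 : K) + y) = v y := aux_ultra hval (by
          rw [hgy, aux_vneg1 hval]
          exact_mod_cast hg)
        rw [show (-1 : K) + y = y - 1 by ring, hgy] at h2
        exact h2
      rw [h1, ← WithTop.coe_add] at hveq
      have heq : (n-1) • gy + gy = ge + n • gx := WithTop.coe_inj.mp hveq
      have heq2 : n • gy = ge + n • gx := by
        rw [← heq, ← succ_nsmul, show n - 1 + 1 = n by omega]
      refine hnd ⟨gy - gx, ?_⟩
      rw [hge]
      norm_cast
      rw [smul_sub, heq2]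
      abel
    · -- v y = 0
      subst hg
      rw [smul_zero, WithTop.coe_zero, zero_add] at hveq
      have hnn : (0:WithTop G) ≤ v (y - 1) :=
        aux_vsub_nonneg hval (le_of_eq hgy.symm) (le_of_eq (aux_v1 hval).symm)
      have hzero : ((ge + n • gx : G) : WithTop G) = 0 :=
        le_antisymm hle (hveq ▸ hnn)
      have h0 : ge + n • gx = 0 := by exact_mod_cast hzero
      refine hnd ⟨-gx, ?_⟩
      rw [hge]
      norm_cast
      rw [smul_neg]
      exact eq_neg_of_add_eq_zero_left h0
    · -- v y > 0 : v (y-1) = 0, LHS positive, contra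
      have h1 : v (y - 1) = 0 := by
        have h2 : v (y + (-1 : K)) = v (-1 : K) := aux_ultra hval (by
          rw [hgy, aux_vneg1 hval]
          exact_mod_cast hg)
        rw [show y + (-1 : K) = y - 1 by ring, aux_vneg1 hval] at h2
        exact h2
      rw [h1, add_zero] at hveq
      have hpos : (0:G) < (n-1) • gy := nsmul_pos hg (by omega)
      rw [← hveq] at hle
      have : ((n-1) • gy : G) ≤ 0 := by exact_mod_cast hle
      exact absurd this (not_le.mpr hpos)
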